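/- Let R be a noetherian local commutative ring with maximal ideal m that is complete with respect to the m-adic topology, and let R' be an étale R-algebra. Then the m-adic completion of R' (the completion of R' with respect to the ideal mR') is a finite étale R-algebra. -/

import Mathlib

open AdicCompletion
open scoped TensorProduct

/-- Topological Nakayama: if `R` is `m`-adically precomplete, `M` is an `m`-adically
Hausdorff module and finitely many elements generate `M` modulo `m • M`, then they
generate `M`. -/
theorem span_eq_top_of_complete_aux {R : Type} [CommRing R] (m : Ideal R)
    {M : Type} [AddCommGroup M] [Module R M] [IsPrecomplete m R]
    (hH : (⨅ n : ℕ, m ^ n • ⊤ : Submodule R M) = ⊥)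
    {d : ℕ} (x : Fin d → M)
    (hx : Submodule.span R (Set.range x) ⊔ m • (⊤ : Submodule R M) = ⊤) :
    Submodule.span R (Set.range x) = ⊤ := by
  classical
  have step : ∀ (n : ℕ) (c : M), c ∈ (m ^ n • ⊤ : Submodule R M) →
      ∃ a : Fin d → R, (∀ i, a i ∈ m ^ n) ∧
        c - ∑ i, a i • x i ∈ (m ^ (n + 1) • ⊤ : Submodule R M) := by
    intro n c hc
    have h1 : (m ^ n • ⊤ : Submodule R M)
        = m ^ n • Submodule.span R (Set.range x) ⊔ m ^ (n + 1) • ⊤ := by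
      conv_lhs => rw [← hx]
      rw [Submodule.smul_sup, pow_succ, ← Ideal.smul_eq_mul, Submodule.smul_assoc]
    rw [h1] at hc
    obtain ⟨u, hu, v, hv, rfl⟩ := Submodule.mem_sup.mp hc
    rw [Submodule.mem_ideal_smul_span_iff_exists_sum] at hu
    obtain ⟨a, ha, hsum⟩ := hu
    refine ⟨a, fun i => ha i, ?_⟩
    have : ∑ i, a i • x i = u := by
      rw [← hsum, Finsupp.sum_fintype]
      intro i; exact zero_smul R (x i)
    rw [this]
    simpa using hv
  rw [eq_top_iff]
  rintro c -
  choose a ha hrem using step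
  have helper : ∀ S1 S2 cn : M, c - S1 = cn → c - (S1 + S2) = cn - S2 := by
    intro S1 S2 cn h
    rw [sub_add_eq_sub_sub, h]
  let F : (n : ℕ) → {q : (Fin d → R) × M //
      q.2 ∈ (m ^ n • ⊤ : Submodule R M) ∧ c - ∑ i, q.1 i • x i = q.2} := fun n =>
    Nat.rec
      ⟨(0, c), by
        constructor
        · rw [pow_zero, Ideal.one_eq_top, Submodule.top_smul]; exact Submodule.mem_top
        · simp⟩
      (fun n p => ⟨(p.1.1 + a n p.1.2 p.2.1, p.1.2 - ∑ i, a n p.1.2 p.2.1 i • x i),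
        hrem n p.1.2 p.2.1, by
          simp only [Pi.add_apply, add_smul, Finset.sum_add_distrib]
          exact helper _ _ _ p.2.2⟩) n
  set s : ℕ → Fin d → R := fun n => (F n).1.1 with hs
  have hsucc : ∀ n, s (n + 1) = s n + a n (F n).1.2 (F n).2.1 := fun n => rfl
  have hcauchy : ∀ n i, s (n + 1) i - s n i ∈ m ^ n := by
    intro n i
    rw [hsucc n]
    simpa using ha n (F n).1.2 (F n).2.1 i
  have htel : ∀ p t i, s (p + t) i - s p i ∈ m ^ p := by
    intro p t i
    induction t with
    | zero => simp
    | succ t ih =>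
        have h2 : s (p + t + 1) i - s p i
            = (s (p + t + 1) i - s (p + t) i) + (s (p + t) i - s p i) := by ring
        rw [show p + (t + 1) = p + t + 1 by omega, h2]
        exact Ideal.add_mem _ (Ideal.pow_le_pow_right (by omega) (hcauchy (p + t) i)) ih
  have hL : ∀ i, ∃ L, ∀ n, s n i ≡ L [SMOD (m ^ n • ⊤ : Submodule R R)] := by
    intro i
    refine IsPrecomplete.prec inferInstance ?_
    intro p q hpq
    rw [SModEq.sub_mem, Ideal.smul_eq_mul, Ideal.mul_top]
    obtain ⟨t, rfl⟩ := Nat.exists_eq_add_of_le hpq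
    rw [← neg_sub]
    exact (m ^ p).neg_mem (htel p t i)
  choose L hLs using hL
  have hmem : ∀ n, c - ∑ i, L i • x i ∈ (m ^ n • ⊤ : Submodule R M) := by
    intro n
    have heq : c - ∑ i, L i • x i = (F n).1.2 + ∑ i, (s n i - L i) • x i := by
      have h := (F n).2.2
      rw [← h]
      simp only [sub_smul, Finset.sum_sub_distrib]
      abel
    rw [heq]
    refine Submodule.add_mem _ (F n).2.1 (Submodule.sum_mem _ fun i _ => ?_)
    have hsl : s n i - L i ∈ m ^ n := by
      have h := (hLs i n)
      rw [SModEq.sub_mem, Ideal.smul_eq_mul, Ideal.mul_top] at h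
      exact h
    exact Submodule.smul_mem_smul hsl Submodule.mem_top
  have hbot : c - ∑ i, L i • x i ∈ (⊥ : Submodule R M) := by
    rw [← hH]
    exact Submodule.mem_iInf _ |>.mpr hmem
  have hc : c = ∑ i, L i • x i := by
    have h := (Submodule.mem_bot R).mp hbot
    rw [sub_eq_zero] at h
    exact h
  rw [hc]
  exact Submodule.sum_mem _ fun i _ =>
    Submodule.smul_mem _ _ (Submodule.subset_span ⟨i, rfl⟩)

/-- If an element of the `I`-adic completion of a noetherian ring `B` vanishes in
`B ⧸ I ^ n`, then it lies in `I ^ n` times the completion. -/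
theorem mem_smul_top_of_val_eq_zero {B : Type} [CommRing B] [IsNoetherianRing B]
    (I : Ideal B) (n : ℕ) (c : AdicCompletion I B) (hc : c.val n = 0) :
    c ∈ (I ^ n • ⊤ : Submodule B (AdicCompletion I B)) := by
  classical
  set N : Submodule B B := (I ^ n • ⊤ : Submodule B B) with hN
  -- the exact sequence 0 → N → B → B/N → 0 stays exact after completion
  have hexact := AdicCompletion.map_exact (I := I) (N.injective_subtype)
    (LinearMap.exact_subtype_mkQ N) (Submodule.mkQ_surjective N)
  -- `c` is killed by the completion of `B → B/N`
  have hker : AdicCompletion.map I N.mkQ c = 0 := by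
    ext j
    rw [AdicCompletion.map_val_apply]
    obtain ⟨b, hb⟩ := Submodule.Quotient.mk_surjective _ (c.val (max n j))
    have hj : c.val j = Submodule.Quotient.mk b := by
      rw [← AdicCompletion.transitionMap_comp_eval_apply I B (le_max_right n j) c,
        ← hb]
      rfl
    have hn : b ∈ N := by
      have h0 : c.val n = Submodule.Quotient.mk b := by
        rw [← AdicCompletion.transitionMap_comp_eval_apply I B (le_max_left n j) c,
          ← hb]
        rfl
      rw [hc] at h0
      rw [hN]
      exact (Submodule.Quotient.mk_eq_zero _).mp h0.symm
    rw [hj, LinearMap.reduceModIdeal_apply]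
    have : N.mkQ b = 0 := (Submodule.Quotient.mk_eq_zero _).mpr hn
    rw [this]
    simp
  obtain ⟨z, hz⟩ := (hexact c).mp hker
  haveI : Module.Finite B ↥N := Module.Finite.iff_fg.mpr (IsNoetherian.noetherian N)
  obtain ⟨t, ht⟩ := AdicCompletion.ofTensorProduct_surjective_of_finite I (↥N) z
  suffices hsub : ∀ t : AdicCompletion I B ⊗[B] ↥N,
      AdicCompletion.map I N.subtype (AdicCompletion.ofTensorProduct I ↥N t)
        ∈ (I ^ n • ⊤ : Submodule B (AdicCompletion I B)) by
    have := hsub t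
    rw [ht, hz] at this
    exact this
  intro t
  induction t with
  | zero => simpa using Submodule.zero_mem _
  | add u v hu hv => simpa using Submodule.add_mem _ hu hv
  | tmul w y =>
      rw [AdicCompletion.ofTensorProduct_tmul, map_smul]
      have hof : AdicCompletion.map I N.subtype (AdicCompletion.of I ↥N y)
          = AdicCompletion.of I B (y : B) := by
        ext j
        simp only [AdicCompletion.map_val_apply, AdicCompletion.of_apply,
          Submodule.mkQ_apply, LinearMap.reduceModIdeal_apply]
        rfl
      rw [hof]
      have hy : (y : B) ∈ I ^ n := by
        have h2 : (y : B) ∈ (I ^ n • ⊤ : Submodule B B) := y.2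
        rwa [Ideal.smul_eq_mul, Ideal.mul_top] at h2
      have hone : AdicCompletion.of I B (y : B) = (y : B) • (1 : AdicCompletion I B) := by
        have : AdicCompletion.of I B (y : B) = algebraMap B (AdicCompletion I B) (y : B) := rfl
        rw [this, Algebra.algebraMap_eq_smul_one]
      rw [hone]
      have hcomm : w • ((y : B) • (1 : AdicCompletion I B))
          = (y : B) • (w • (1 : AdicCompletion I B)) := by
        rw [Algebra.smul_def (y : B), Algebra.smul_def (y : B), smul_eq_mul, smul_eq_mul]
        ring
      rw [hcomm]
      exact Submodule.smul_mem_smul hy Submodule.mem_top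

/-- Let R be a complete noetherian local ring with maximal ideal m and let R' be an étale
R-algebra. Then the m-adic completion of R' (the completion of R' with respect to the
ideal m·R') is a finite étale R-algebra. -/
theorem adicCompletion_finite_etale
    (R R' : Type) [CommRing R] [IsLocalRing R] [IsNoetherianRing R]
    [IsAdicComplete (IsLocalRing.maximalIdeal R) R]
    [CommRing R'] [Algebra R R'] [Algebra.Etale R R'] :
    letI C := AdicCompletion ((IsLocalRing.maximalIdeal R).map (algebraMap R R')) R'
    letI : Algebra R C := ((algebraMap R' C).comp (algebraMap R R')).toAlgebra
    Algebra.Etale R C ∧ Module.Finite R C := by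
  classical
  set m : Ideal R := IsLocalRing.maximalIdeal R with hm
  set I : Ideal R' := m.map (algebraMap R R') with hI
  set C := AdicCompletion I R' with hC
  letI : Algebra R C := ((algebraMap R' C).comp (algebraMap R R')).toAlgebra
  letI : Module R C := Algebra.toModule
  haveI : @IsScalarTower R R' C _ _ Algebra.toSMul := IsScalarTower.of_algebraMap_eq' rfl
  haveI : IsNoetherianRing R' := Algebra.FiniteType.isNoetherianRing R R'
  -- the special fibre `R' ⧸ I` is a finite `R`-module
  haveI hfib : Module.Finite R (R' ⧸ I) := by
    haveI : Module.Finite (IsLocalRing.ResidueField R)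
        ((IsLocalRing.ResidueField R) ⊗[R] R') :=
      Algebra.FormallyUnramified.finite_of_free (IsLocalRing.ResidueField R) _
    haveI : Module.Finite R (IsLocalRing.ResidueField R) :=
      Module.Finite.of_surjective (Submodule.mkQ (m : Submodule R R))
        (Submodule.mkQ_surjective _)
    haveI : Module.Finite R ((IsLocalRing.ResidueField R) ⊗[R] R') :=
      Module.Finite.trans (IsLocalRing.ResidueField R) _
    have hle : m ≤ I.comap (algebraMap R R') := fun r hr => Ideal.mem_map_of_mem _ hr
    let fk : IsLocalRing.ResidueField R →ₐ[R] R' ⧸ I :=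
      { toRingHom := Ideal.quotientMap I (algebraMap R R') hle
        commutes' := fun r => by
          show Ideal.quotientMap I (algebraMap R R') hle (Ideal.Quotient.mk m r)
              = algebraMap R (R' ⧸ I) r
          rw [Ideal.quotientMap_mk]
          rfl }
    let q : ((IsLocalRing.ResidueField R) ⊗[R] R') →ₐ[R] R' ⧸ I :=
      Algebra.TensorProduct.productMap fk (Ideal.Quotient.mkₐ R I)
    have hq : Function.Surjective q := by
      intro z
      obtain ⟨b, rfl⟩ := Ideal.Quotient.mk_surjective z
      refine ⟨(1 : IsLocalRing.ResidueField R) ⊗ₜ b, ?_⟩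
      simp [q, Algebra.TensorProduct.productMap_apply_tmul]
    exact Module.Finite.of_surjective q.toLinearMap hq
  -- generators of `R' ⧸ I` over `R`, lifted to `R'`
  obtain ⟨d, y, hy⟩ := Module.Finite.exists_fin (R := R) (M := R' ⧸ I)
  have hlift : ∀ i, ∃ b : R', Ideal.Quotient.mk I b = y i :=
    fun i => Ideal.Quotient.mk_surjective (y i)
  choose x' hx' using hlift
  set ι : R' →ₐ[R] C := IsScalarTower.toAlgHom R R' C with hι
  -- scalar comparison
  have hres : ∀ n : ℕ, ((I ^ n • ⊤ : Submodule R' C) : Set C)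
      = ((m ^ n • ⊤ : Submodule R C) : Set C) := by
    intro n
    have h1 : (I ^ n : Ideal R') = (m ^ n).map (algebraMap R R') := by
      rw [hI, Ideal.map_pow]
    have h2 := Ideal.smul_restrictScalars (m ^ n) (⊤ : Submodule R' C)
    rw [Submodule.restrictScalars_top] at h2
    rw [h1, ← h2]
    rfl
  have hIC : ∀ (n : ℕ) (z : C), z ∈ (I ^ n • ⊤ : Submodule R' C)
      → z ∈ (m ^ n • ⊤ : Submodule R C) := by
    intro n z hz
    have h : z ∈ ((I ^ n • ⊤ : Submodule R' C) : Set C) := hz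
    rw [hres n] at h
    exact h
  -- elements of `I` map into `m • C`
  have hIsmul : ∀ b : R', b ∈ I → ι b ∈ (m • ⊤ : Submodule R C) := by
    intro b hb
    have h2 : ι b ∈ (I ^ 1 • ⊤ : Submodule R' C) := by
      rw [pow_one]
      have h1 : ι b = b • (1 : C) := Algebra.algebraMap_eq_smul_one (A := C) b
      rw [h1]
      exact Submodule.smul_mem_smul hb Submodule.mem_top
    have h3 := hIC 1 _ h2
    rwa [pow_one] at h3
  -- the images of the `x'` generate `C` modulo `m • C`
  have hspan : Submodule.span R (Set.range fun i => ι (x' i))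
      ⊔ m • (⊤ : Submodule R C) = ⊤ := by
    rw [eq_top_iff]
    rintro c -
    obtain ⟨b, hb⟩ := Submodule.Quotient.mk_surjective _ (c.val 1)
    have hval : (c - ι b).val 1 = 0 := by
      rw [AdicCompletion.val_sub_apply]
      have : (ι b).val 1 = Submodule.Quotient.mk b := rfl
      rw [this, hb, sub_self]
    have hc1 : c - ι b ∈ (m • ⊤ : Submodule R C) := by
      have h := hIC 1 _ (mem_smul_top_of_val_eq_zero I 1 (c - ι b) hval)
      rwa [pow_one] at h
    -- decompose b along the generators
    have hbspan : Ideal.Quotient.mk I b ∈ Submodule.map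
        (Ideal.Quotient.mkₐ R I).toLinearMap (Submodule.span R (Set.range x')) := by
      rw [Submodule.map_span, ← Set.range_comp]
      have hcomp : ((Ideal.Quotient.mkₐ R I).toLinearMap ∘ x') = y := funext fun i => hx' i
      rw [hcomp, hy]
      exact Submodule.mem_top
    obtain ⟨b', hb', hbb'⟩ := hbspan
    have hdiff : b - b' ∈ I := by
      have : Ideal.Quotient.mk I (b - b') = 0 := by
        rw [map_sub]
        have : Ideal.Quotient.mk I b' = Ideal.Quotient.mk I b := hbb'
        rw [this, sub_self]
      rwa [Ideal.Quotient.eq_zero_iff_mem] at this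
    have hmem1 : ι b' ∈ Submodule.span R (Set.range fun i => ι (x' i)) := by
      have : ι b' ∈ Submodule.map ι.toLinearMap (Submodule.span R (Set.range x')) :=
        ⟨b', hb', rfl⟩
      rw [Submodule.map_span, ← Set.range_comp] at this
      exact this
    have : c = ι b' + (ι (b - b') + (c - ι b)) := by
      rw [map_sub]
      abel
    rw [this]
    refine Submodule.add_mem _ (Submodule.mem_sup_left hmem1) (Submodule.mem_sup_right ?_)
    exact Submodule.add_mem _ (hIsmul _ hdiff) hc1
  -- Hausdorff property over `R`
  have hH : (⨅ n : ℕ, m ^ n • ⊤ : Submodule R C) = ⊥ := by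
    rw [eq_bot_iff]
    intro c hc
    rw [Submodule.mem_iInf] at hc
    have : ∀ n : ℕ, c ∈ (I ^ n • ⊤ : Submodule R' C) := by
      intro n
      have h := hc n
      have : c ∈ ((m ^ n • ⊤ : Submodule R C) : Set C) := h
      rw [← hres n] at this
      exact this
    exact IsHausdorff.haus (inferInstance : IsHausdorff I C) c
      (fun n => SModEq.zero.mpr (this n))
  -- topological Nakayama
  have hspan2 := span_eq_top_of_complete_aux m hH _ hspan
  haveI hfinC : Module.Finite R C := by
    constructor
    rw [← hspan2]
    exact Submodule.fg_span (Set.finite_range _)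
  -- surjectivity of `R' → C`
  have hsurj : Function.Surjective ι := by
    intro c
    have hle : Submodule.span R (Set.range fun i => ι (x' i))
        ≤ LinearMap.range ι.toLinearMap := by
      rw [Submodule.span_le]
      rintro - ⟨i, rfl⟩
      exact ⟨x' i, rfl⟩
    have : c ∈ LinearMap.range ι.toLinearMap := hle (hspan2 ▸ Submodule.mem_top)
    exact this
  -- the kernel of `R' → C`
  set K : Ideal R' := RingHom.ker (algebraMap R' C) with hK
  have hKle : ∀ n : ℕ, (K : Submodule R' R') ≤ (I ^ n • ⊤ : Submodule R' R') := by
    intro n b hb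
    have h0 : algebraMap R' C b = 0 := hb
    have h1 : (algebraMap R' C b).val n = 0 := by rw [h0, AdicCompletion.val_zero_apply]
    have h2 : (algebraMap R' C b).val n = Submodule.Quotient.mk b := rfl
    rw [h2] at h1
    exact (Submodule.Quotient.mk_eq_zero _).mp h1
  obtain ⟨j, hj⟩ := Ideal.exists_pow_inf_eq_pow_smul I (K : Submodule R' R')
  have hKIK : (K : Submodule R' R') ≤ I • (K : Submodule R' R') := by
    have h1 := hj (j + 1) (by omega)
    rw [inf_eq_right.mpr (hKle (j + 1))] at h1
    calc (K : Submodule R' R')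
        = I ^ (j + 1 - j) • (I ^ j • ⊤ ⊓ (K : Submodule R' R')) := h1
      _ ≤ I • (K : Submodule R' R') := by
          rw [show j + 1 - j = 1 by omega, pow_one]
          exact smul_mono_right _ inf_le_right
  obtain ⟨r, hrI, hr⟩ := Submodule.exists_mem_and_smul_eq_self_of_fg_of_le_smul I
    (K : Submodule R' R') (IsNoetherian.noetherian _) hKIK
  haveI : Algebra.IsIntegral R C := Algebra.IsIntegral.of_finite R C
  have hjac : algebraMap R' C r ∈ Ideal.jacobson (⊥ : Ideal C) := by
    have h1 : algebraMap R' C r ∈ Ideal.map (algebraMap R C) m := by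
      have h2 : algebraMap R' C r ∈ Ideal.map (algebraMap R' C)
          (Ideal.map (algebraMap R R') m) := Ideal.mem_map_of_mem _ hrI
      rw [Ideal.map_map] at h2
      exact h2
    have hle2 : Ideal.map (algebraMap R C) m ≤ Ideal.jacobson (⊥ : Ideal C) := by
      refine le_sInf ?_
      rintro J ⟨-, hJmax⟩
      haveI := hJmax
      haveI hcm := Ideal.isMaximal_comap_of_isIntegral_of_isMaximal (R := R) J
      have hcme : J.comap (algebraMap R C) = m := IsLocalRing.eq_maximalIdeal hcm
      rw [Ideal.map_le_iff_le_comap, hcme]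
    exact hle2 h1
  have hrunit : IsUnit (1 - algebraMap R' C r) := by
    have h := Ideal.mem_jacobson_bot.mp hjac (-1)
    rwa [show algebraMap R' C r * (-1) + 1 = 1 - algebraMap R' C r by ring] at h
  haveI : IsLocalization.Away (1 - r) C := by
    refine ⟨?_, ?_, ?_⟩
    · rintro ⟨y, hy⟩
      obtain ⟨n, rfl⟩ := hy
      rw [map_pow, map_sub, map_one]
      exact hrunit.pow n
    · intro z
      obtain ⟨b, hb⟩ := hsurj z
      refine ⟨(b, 1), ?_⟩
      have : (ι b : C) = algebraMap R' C b := rfl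
      simp only [OneMemClass.coe_one, map_one, mul_one]
      rw [← hb, this]
    · intro x y h
      have hxy : x - y ∈ K := by
        rw [hK, RingHom.mem_ker, map_sub, h, sub_self]
      have h2 := hr (x - y) hxy
      rw [smul_eq_mul] at h2
      have h3 : (1 - r) * (x - y) = 0 := by
        rw [sub_mul, one_mul, h2, sub_self]
      exact ⟨⟨1 - r, Submonoid.mem_powers _⟩, by linear_combination h3⟩
  haveI hetRC : Algebra.Etale R' C := Algebra.Etale.of_isLocalizationAway (1 - r)
  haveI : Algebra.Etale R C := Algebra.Etale.comp R R' C
  refine ⟨inferInstance, ?_⟩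
  convert hfinC using 1
  refine Module.ext' _ _ fun r z => ?_
  have h1 : (@HSMul.hSMul R C C (@instHSMul R C (AdicCompletion.instSMul I R')) r z)
      = algebraMap R R' r • z :=
    (@algebraMap_smul R _ R' _ _ C _ _ (AdicCompletion.instModuleOfIsScalarTower I R') _ r z).symm
  rw [h1, Algebra.smul_def]
  rfl
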